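/- Let Λ be a finite, connected, triangle-free simplicial graph with at least 2 vertices, and let a be a vertex of Λ. Then the centralizer C(a) in the right-angled Artin group G_Λ splits as a direct product C(a) = ⟨a⟩ × F(Lk_Λ(a)), where F(Lk_Λ(a)) is the free group on the set of vertices adjacent to a; moreover the subgroup generated by Lk_Λ(a) in G_Λ is free. -/

import Mathlib

/-- The commutator relators of a right-angled Artin group on the graph `Λ`. -/
def raagRels {V : Type*} (Λ : SimpleGraph V) : Set (FreeGroup V) :=
  {r | ∃ u v : V, Λ.Adj u v ∧
    r = FreeGroup.of u * FreeGroup.of v * (FreeGroup.of u)⁻¹ * (FreeGroup.of v)⁻¹}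

/-- The right-angled Artin group on the graph `Λ`. -/
abbrev RAAG {V : Type*} (Λ : SimpleGraph V) := PresentedGroup (raagRels Λ)

/-- The standard generator of the RAAG corresponding to a vertex. -/
def raagOf {V : Type*} (Λ : SimpleGraph V) (v : V) : RAAG Λ := PresentedGroup.of v


open Monoid Monoid.PushoutI Monoid.PushoutI.NormalWord Monoid.CoprodI Function

set_option linter.unusedSectionVars false

namespace RaagAux



variable {ι : Type*} [DecidableEq ι] {H : Type*} {G : ι → Type*} [Group H] [∀ i, Group (G i)]
  {φ : ∀ i, H →* G i}

/-- Lemma A: a nonempty reduced word whose first letter is not in factor `j`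
is not in the image of `G j`. -/
theorem notInRange_of_reduced (hφ : ∀ i, Injective (φ i)) {j : ι} {w : Word G}
    (hred : Reduced φ w) (hne : w.toList ≠ []) (hfst : w.fstIdx ≠ some j) :
    ofCoprodI (φ := φ) w.prod ∉ (of (φ := φ) j).range := by
  rintro ⟨b, hb⟩
  by_cases hbr : b ∈ (φ j).range
  · rcases hbr with ⟨h, rfl⟩
    have : ofCoprodI (φ := φ) w.prod ∈ (base φ).range := by
      rw [← hb, of_apply_eq_base]
      exact ⟨h, rfl⟩
    have := hred.eq_empty_of_mem_range hφ this
    rw [this] at hne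
    exact hne rfl
  · have hb1 : b⁻¹ ≠ 1 := by
      intro h
      rw [inv_eq_one] at h
      exact hbr (h ▸ (φ j).range.one_mem)
    set w' : Word G := Word.cons (i := j) b⁻¹ w hfst hb1 with hw'
    have hred' : Reduced φ w' := by
      intro g hg
      rcases List.mem_cons.1 hg with h | h
      · subst h
        simpa using fun hr => hbr ((φ j).range.inv_mem_iff.1 hr)
      · exact hred g h
    have hprod : ofCoprodI (φ := φ) w'.prod ∈ (base φ).range := by
      rw [hw', Word.prod_cons]
      simp only [map_mul, ofCoprodI_of, map_inv, hb]
      exact ⟨1, by simp⟩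
    have := hred'.eq_empty_of_mem_range hφ hprod
    have : w'.toList = [] := by rw [this]; rfl
    simp [hw', Word.cons] at this

/-- Tail of a word as a word. -/
def wordTail (w : Word G) : Word G :=
  ⟨w.toList.tail, fun l hl => w.ne_one l (List.mem_of_mem_tail hl), w.chain_ne.tail⟩

/-- Lemma C: a reduced word of length at least 2 is in no factor's image. -/
theorem notInRange_of_reduced' (hφ : ∀ i, Injective (φ i)) {j : ι} {w : Word G}
    (hred : Reduced φ w) (hlen : 2 ≤ w.toList.length) :
    ofCoprodI (φ := φ) w.prod ∉ (of (φ := φ) j).range := by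
  rcases hl : w.toList with _ | ⟨⟨i, g⟩, rest⟩
  · simp [hl] at hlen
  by_cases hij : i = j
  · subst hij
    rintro ⟨b, hb⟩
    -- strip the first letter
    have hrest : rest ≠ [] := by
      intro h; rw [h] at hl; rw [hl] at hlen; simp at hlen
    have hw2 : (wordTail w).toList = rest := by simp [wordTail, hl]
    have hchain := w.chain_ne
    rw [hl] at hchain
    have hfst2 : (wordTail w).fstIdx ≠ some i := by
      rcases rest with _ | ⟨⟨i', g'⟩, rest'⟩
      · exact absurd rfl hrest
      · have : i ≠ i' := (List.isChain_cons_cons.1 hchain).1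
        simp [Word.fstIdx, hw2]
        exact fun h => this h.symm
    have hred2 : Reduced φ (wordTail w) := fun l hl' => hred l (by
      rw [hw2] at hl'; rw [hl]; exact List.mem_cons_of_mem _ hl')
    have hprodw : w.prod = Monoid.CoprodI.of g * (wordTail w).prod := by
      simp [Word.prod, hl, hw2]
    have hX : ofCoprodI (φ := φ) (wordTail w).prod = of (φ := φ) i (g⁻¹ * b) := by
      rw [map_mul, map_inv, hb, hprodw, map_mul, ofCoprodI_of, ← mul_assoc,
        inv_mul_cancel, one_mul]
    have hne2 : (wordTail w).toList ≠ [] := by rw [hw2]; exact hrest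
    exact notInRange_of_reduced hφ hred2 hne2 hfst2 ⟨g⁻¹ * b, hX.symm⟩
  · exact notInRange_of_reduced hφ hred (by rw [hl]; simp)
      (by simp [Word.fstIdx, hl]; exact fun h => hij h)


theorem prod_eq_cons (w : Word G) {i : ι} {g : G i} {rest : List (Σ i, G i)}
    (hl : w.toList = ⟨i, g⟩ :: rest) :
    w.prod = Monoid.CoprodI.of g * (wordTail w).prod := by
  simp [Word.prod, wordTail, hl]

theorem reduced_of_normalized (d : Transversal φ) (w : NormalWord d) :
    Reduced φ w.toWord := by
  intro l hl
  rintro ⟨h, hh⟩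
  have hset : l.2 ∈ d.set l.1 := w.normalized l.1 l.2 hl
  have hne : l.2 ≠ 1 := w.toWord.ne_one l hl
  have hinj := (d.compl l.1).1
  have := hinj (a₁ := (⟨⟨l.2, ⟨h, hh⟩⟩, ⟨1, d.one_mem l.1⟩⟩ : _ × _))
      (a₂ := (⟨⟨1, Subgroup.one_mem _⟩, ⟨l.2, hset⟩⟩ : _ × _)) (by simp)
  apply hne
  have := congrArg (fun p => (p.1 : G l.1)) this
  simpa using this

/-- Lemma B : coset decomposition. -/
theorem exists_decomp (hφ : ∀ i, Injective (φ i)) (j : ι) (g : PushoutI φ) :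
    ∃ (b : G j) (w : Word G), Reduced φ w ∧ w.fstIdx ≠ some j ∧
      g = of (φ := φ) j b * ofCoprodI (φ := φ) w.prod := by
  classical
  rcases transversal_nonempty φ hφ with ⟨d⟩
  set nw := NormalWord.equiv (d := d) g with hnw
  have hg' : nw.prod = g := (NormalWord.equiv (d := d)).symm_apply_apply g
  have hg : g = base φ nw.head * ofCoprodI (φ := φ) nw.toWord.prod := by
    rw [← hg']; rfl
  have hred : Reduced φ nw.toWord := reduced_of_normalized d nw
  rcases hl : nw.toWord.toList with _ | ⟨⟨i, g₁⟩, rest⟩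
  · refine ⟨φ j nw.head, Word.empty, ?_, by simp [Word.fstIdx, Word.empty], ?_⟩
    · intro l hl'; simp [Word.empty] at hl'
    · rw [hg, of_apply_eq_base]
      simp [Word.prod, hl, Word.empty]
  · by_cases hij : i = j
    · subst hij
      refine ⟨φ i nw.head * g₁, wordTail nw.toWord, ?_, ?_, ?_⟩
      · intro l hl'
        have htl : (wordTail nw.toWord).toList = rest := by simp [wordTail, hl]
        rw [htl] at hl'
        exact hred l (by rw [hl]; exact List.mem_cons_of_mem _ hl')
      · have hchain := nw.toWord.chain_ne
        rw [hl] at hchain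
        rcases hrest : rest with _ | ⟨⟨i', g'⟩, rest'⟩
        · simp [Word.fstIdx, wordTail, hl, hrest]
        · have : i ≠ i' := by
            rw [hrest] at hchain
            exact (List.isChain_cons_cons.1 hchain).1
          simp [Word.fstIdx, wordTail, hl, hrest]
          exact fun h => this h.symm
      · rw [hg, prod_eq_cons nw.toWord hl, map_mul, ofCoprodI_of, map_mul,
          of_apply_eq_base, mul_assoc]
    · refine ⟨φ j nw.head, nw.toWord, hred, ?_, ?_⟩
      · simp [Word.fstIdx, hl]
        exact fun h => hij h
      · rw [hg, of_apply_eq_base]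

/-- Lemma D : if no `G j`-conjugate of `c` lies in the base group, then every element
conjugating `of j c` into `G j` lies in `G j`. -/
theorem mem_range_of_conj (hφ : ∀ i, Injective (φ i)) {j : ι} {c : G j}
    (hc : ∀ b : G j, b * c * b⁻¹ ∉ (φ j).range) {g : PushoutI φ}
    (hg : g⁻¹ * of (φ := φ) j c * g ∈ (of (φ := φ) j).range) :
    g ∈ (of (φ := φ) j).range := by
  classical
  rcases exists_decomp hφ j g with ⟨b, w, hred, hfst, rfl⟩
  rcases hl : w.toList with _ | ⟨⟨i₀, g₀⟩, rest⟩
  · have : w.prod = 1 := by simp [Word.prod, hl]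
    rw [this]
    simp only [map_one, mul_one]
    exact ⟨b, rfl⟩
  exfalso
  set c' : G j := b⁻¹ * c * b with hc'def
  have hc'r : c' ∉ (φ j).range := by
    have := hc b⁻¹
    rwa [inv_inv] at this
  have hc'1 : c' ≠ 1 := fun h => hc'r (h ▸ Subgroup.one_mem _)
  set σ : (Σ i, G i) → (Σ i, G i) := fun l => ⟨l.1, l.2⁻¹⟩ with hσ
  set L : List (Σ i, G i) := (w.toList.map σ).reverse ++ ⟨j, c'⟩ :: w.toList with hL
  have hhead : ∀ y ∈ w.toList.head?, (⟨j, c'⟩ : Σ i, G i).1 ≠ y.1 := by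
    intro y hy
    rw [Word.fstIdx_ne_iff] at hfst
    exact hfst y hy
  have hWchain : L.IsChain (fun l l' => l.1 ≠ l'.1) := by
    rw [hL, List.isChain_append]
    refine ⟨?_, ?_, ?_⟩
    · rw [List.isChain_reverse, List.isChain_map]
      exact w.chain_ne.imp (fun a b h => by simp [hσ, Function.flip_def]; exact fun hh => h hh.symm)
    · refine (w.chain_ne).cons hhead
    · intro x hx y hy
      rw [List.getLast?_reverse, List.head?_map] at hx
      simp only [List.head?_cons, Option.mem_some_iff] at hy
      subst hy
      rcases Option.map_eq_some_iff.1 hx with ⟨z, hz, rfl⟩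
      exact fun h => hhead z hz (by simp [hσ] at h ⊢; exact h.symm)
  have hWne : ∀ l ∈ L, l.2 ≠ 1 := by
    intro l hlmem
    rw [hL] at hlmem
    rcases List.mem_append.1 hlmem with h | h
    · rcases List.mem_map.1 (List.mem_reverse.1 h) with ⟨z, hz, rfl⟩
      simpa [hσ, σ] using w.ne_one z hz
    · rcases List.mem_cons.1 h with h | h
      · rw [h]; exact hc'1
      · exact w.ne_one l h
  set W : Word G := ⟨L, hWne, hWchain⟩ with hW
  have hWred : Reduced φ W := by
    intro l hlmem
    replace hlmem : l ∈ L := hlmem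
    rw [hL] at hlmem
    rcases List.mem_append.1 hlmem with h | h
    · rcases List.mem_map.1 (List.mem_reverse.1 h) with ⟨z, hz, rfl⟩
      simpa [hσ, σ, Subgroup.inv_mem_iff] using hred z hz
    · rcases List.mem_cons.1 h with h | h
      · rw [h]; exact hc'r
      · exact hred l h
  have hlen : 2 ≤ W.toList.length := by
    simp only [hW, hL, List.length_append, List.length_cons, List.length_reverse,
      List.length_map, hl]
    omega
  have hprodW : W.prod = w.prod⁻¹ * Monoid.CoprodI.of c' * w.prod := by
    show (L.map fun l => Monoid.CoprodI.of l.2).prod = _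
    rw [hL, List.map_append, List.prod_append, List.map_cons, List.prod_cons]
    have : ((w.toList.map σ).reverse.map fun l => Monoid.CoprodI.of l.2) =
        ((w.toList.map fun l => Monoid.CoprodI.of l.2).map fun x => x⁻¹).reverse := by
      rw [List.map_reverse, List.map_map, List.map_map]
      refine congrArg List.reverse (List.map_congr_left ?_)
      intro x _
      simp [hσ]
    rw [this, ← List.prod_inv_reverse]
    simp [Word.prod, mul_assoc]
  have hconj : ofCoprodI (φ := φ) W.prod ∈ (of (φ := φ) j).range := by
    have : ofCoprodI (φ := φ) W.prod =
        (of (φ := φ) j b * ofCoprodI (φ := φ) w.prod)⁻¹ * of (φ := φ) j c *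
          (of (φ := φ) j b * ofCoprodI (φ := φ) w.prod) := by
      rw [hprodW, map_mul, map_mul, map_inv, ofCoprodI_of, hc'def, mul_inv_rev]
      simp only [map_mul, map_inv, mul_assoc]
    rw [this]
    exact hg
  exact notInRange_of_reduced' hφ hWred hlen hconj




variable {V : Type*} {Λ : SimpleGraph V} {G : Type*} [Group G]

/-- Universal property of the RAAG. -/
def raagLift (f : V → G) (hf : ∀ u v, Λ.Adj u v → Commute (f u) (f v)) :
    RAAG Λ →* G :=
  PresentedGroup.toGroup (f := f) (by
    rintro r ⟨u, v, huv, rfl⟩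
    simp only [map_mul, map_inv, FreeGroup.lift_apply_of]
    rw [(hf u v huv).eq]
    group)

@[simp]
theorem raagLift_of (f : V → G) (hf : ∀ u v, Λ.Adj u v → Commute (f u) (f v)) (v : V) :
    raagLift f hf (raagOf Λ v) = f v :=
  PresentedGroup.toGroup.of _

theorem raag_commute {u v : V} (huv : Λ.Adj u v) :
    Commute (raagOf Λ u) (raagOf Λ v) := by
  have h : PresentedGroup.mk (raagRels Λ)
      (FreeGroup.of u * FreeGroup.of v * (FreeGroup.of u)⁻¹ * (FreeGroup.of v)⁻¹) = 1 := by
    exact PresentedGroup.one_of_mem ⟨u, v, huv, rfl⟩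
  have := h
  simp only [map_mul, map_inv] at this
  have h2 : raagOf Λ u * raagOf Λ v * (raagOf Λ u)⁻¹ * (raagOf Λ v)⁻¹ = 1 := this
  have := mul_eq_one_iff_eq_inv.1 h2
  rw [Commute]
  rw [SemiconjBy]
  have h3 : raagOf Λ u * raagOf Λ v = raagOf Λ v * raagOf Λ u := by
    have := congrArg (fun x => x * raagOf Λ v * raagOf Λ u) h2
    simpa [mul_assoc] using this
  exact h3

/-- If `u, v, a` form no triangle, generators of the link commute appropriately;
helper for triangle-freeness. -/
theorem not_both_adj (htri : Λ.CliqueFree 3) {a u v : V} (huv : Λ.Adj u v)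
    (hu : Λ.Adj a u) (hv : Λ.Adj a v) : False := by
  classical
  exact htri {a, u, v} (SimpleGraph.is3Clique_triple_iff.2 ⟨hu, hv, huv⟩)

/-- The free group on the link embeds: the retraction. -/
theorem freeGroupLink_injective (htri : Λ.CliqueFree 3) (a : V) :
    ∃ ψ : FreeGroup (Λ.neighborSet a) →* RAAG Λ,
      Function.Injective ψ ∧ ∀ b : Λ.neighborSet a, ψ (FreeGroup.of b) = raagOf Λ (b : V) := by
  classical
  refine ⟨FreeGroup.lift (fun b : Λ.neighborSet a => raagOf Λ (b : V)), ?_, fun b => FreeGroup.lift_apply_of⟩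
  set ρ : RAAG Λ →* FreeGroup (Λ.neighborSet a) :=
    raagLift (fun v => if h : v ∈ Λ.neighborSet a then FreeGroup.of ⟨v, h⟩ else 1) (by
      intro u v huv
      by_cases hu : u ∈ Λ.neighborSet a
      · by_cases hv : v ∈ Λ.neighborSet a
        · exact absurd (not_both_adj htri huv hu hv) (by simp)
        · simp [hu, hv, Commute.one_right]
      · simp [hu, Commute.one_left]) with hρ
  have : ∀ x, ρ (FreeGroup.lift (fun b : Λ.neighborSet a => raagOf Λ (b : V)) x) = x := by
    intro x
    have : ρ.comp (FreeGroup.lift (fun b : Λ.neighborSet a => raagOf Λ (b : V))) = MonoidHom.id _ := by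
      apply FreeGroup.ext_hom
      intro b
      simp only [hρ, MonoidHom.comp_apply, FreeGroup.lift_apply_of, raagLift_of, MonoidHom.id_apply]
      rw [dif_pos b.2]
    exact DFunLike.congr_fun this x
  intro x y hxy
  rw [← this x, ← this y, hxy]



section Star

variable {V : Type*} (Λ : SimpleGraph V) (a : V)

/-- The free group on the link of `a`. -/
abbrev CC := FreeGroup (Λ.neighborSet a)

/-- The RAAG on the graph with `a` removed. -/
abbrev AA := RAAG (Λ.induce {v | v ≠ a})

/-- `⟨a⟩ × F(link)`. -/
abbrev BB := Multiplicative ℤ × FreeGroup (Λ.neighborSet a)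

/-- The two factor groups. -/
abbrev GG : Bool → Type _ := fun i => Bool.rec (AA Λ a) (BB Λ a) i

instance : ∀ i, Group (GG Λ a i) := fun i =>
  match i with
  | false => inferInstanceAs (Group (AA Λ a))
  | true => inferInstanceAs (Group (BB Λ a))

/-- The base inclusion into `AA`. -/
def φA : CC Λ a →* AA Λ a :=
  FreeGroup.lift (fun b => raagOf _ ⟨(b : V), b.2.ne'⟩)

/-- The base inclusion into `BB`. -/
def φB : CC Λ a →* BB Λ a := MonoidHom.inr _ _

/-- The amalgamation diagram. -/
def φmap : ∀ i, CC Λ a →* GG Λ a i := fun i =>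
  match i with
  | false => φA Λ a
  | true => φB Λ a

theorem φA_injective (htri : Λ.CliqueFree 3) : Function.Injective (φA Λ a) := by
  classical
  set ρA : AA Λ a →* CC Λ a :=
    raagLift (fun v => if h : (v : V) ∈ Λ.neighborSet a then FreeGroup.of ⟨v, h⟩ else 1) (by
      intro u v huv
      have huv' : Λ.Adj (u : V) (v : V) := huv
      by_cases hu : (u : V) ∈ Λ.neighborSet a
      · by_cases hv : (v : V) ∈ Λ.neighborSet a
        · exact absurd (not_both_adj htri huv' hu hv) (by simp)
        · simp [hu, hv, Commute.one_right]
      · simp [hu, Commute.one_left]) with hρA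
  have key : ∀ x, ρA (φA Λ a x) = x := by
    intro x
    have : ρA.comp (φA Λ a) = MonoidHom.id _ := by
      apply FreeGroup.ext_hom
      intro b
      simp only [MonoidHom.comp_apply, MonoidHom.id_apply, φA, FreeGroup.lift_apply_of, hρA, raagLift_of]
      rw [dif_pos b.2]
    exact DFunLike.congr_fun this x
  intro x y hxy
  rw [← key x, ← key y, hxy]

theorem φmap_injective (htri : Λ.CliqueFree 3) :
    ∀ i, Function.Injective (φmap Λ a i) := by
  intro i
  cases i
  · exact φA_injective Λ a htri
  · intro x y h
    exact congrArg Prod.snd h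

/-- The pushout. -/
abbrev GP := PushoutI (φmap Λ a)

/-- The free group on the link mapping to the RAAG. -/
def ψC : CC Λ a →* RAAG Λ := FreeGroup.lift (fun b : Λ.neighborSet a => raagOf Λ (b : V))

theorem comm_a_ψC : ∀ w, Commute (raagOf Λ a) (ψC Λ a w) := by
  intro w
  induction w using FreeGroup.induction_on with
  | C1 => simp only [map_one]; exact Commute.one_right _
  | of b => simpa [ψC] using raag_commute b.2
  | inv_of b ih => simpa only [map_inv] using ih.inv_right
  | mul x y ihx ihy => simpa only [map_mul] using ihx.mul_right ihy

/-- The map `AA →* RAAG Λ`. -/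
def fA : AA Λ a →* RAAG Λ :=
  raagLift (fun v => raagOf Λ (v : V))
    (fun u v huv => raag_commute (show Λ.Adj (u : V) (v : V) from huv))

/-- The map `BB →* RAAG Λ`. -/
def fB : BB Λ a →* RAAG Λ :=
  MonoidHom.noncommCoprod (zpowersHom _ (raagOf Λ a)) (ψC Λ a)
    (fun m w => (comm_a_ψC Λ a w).zpow_left (Multiplicative.toAdd m))

theorem fB_apply (m : Multiplicative ℤ) (w : CC Λ a) :
    fB Λ a (m, w) = raagOf Λ a ^ (Multiplicative.toAdd m) * ψC Λ a w := rfl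

/-- `GP →* RAAG Λ`. -/
def toRaag : GP Λ a →* RAAG Λ :=
  PushoutI.lift (fun i => match i with | false => fA Λ a | true => fB Λ a) (ψC Λ a) (by
    intro i
    cases i
    · apply FreeGroup.ext_hom
      intro b
      show fA Λ a (φA Λ a (FreeGroup.of b)) = ψC Λ a (FreeGroup.of b)
      rw [φA, FreeGroup.lift_apply_of, fA, raagLift_of, ψC, FreeGroup.lift_apply_of]
    · apply FreeGroup.ext_hom
      intro b
      show fB Λ a (φB Λ a (FreeGroup.of b)) = ψC Λ a (FreeGroup.of b)
      rw [show φB Λ a (FreeGroup.of b) = (1, FreeGroup.of b) from rfl, fB_apply]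
      simp)

theorem toRaag_of_false (x : AA Λ a) :
    toRaag Λ a (PushoutI.of (φ := φmap Λ a) false x) = fA Λ a x :=
  PushoutI.lift_of _ _ _ _

theorem toRaag_of_true (x : BB Λ a) :
    toRaag Λ a (PushoutI.of (φ := φmap Λ a) true x) = fB Λ a x :=
  PushoutI.lift_of _ _ _ _

/-- Key identity: the generator of a link vertex is in both factors. -/
theorem of_false_link (b : Λ.neighborSet a) :
    PushoutI.of (φ := φmap Λ a) false (raagOf _ ⟨(b : V), b.2.ne'⟩) =
      PushoutI.of (φ := φmap Λ a) true (1, FreeGroup.of b) := by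
  have h1 := PushoutI.of_apply_eq_base (φ := φmap Λ a) false (FreeGroup.of b)
  have h2 := PushoutI.of_apply_eq_base (φ := φmap Λ a) true (FreeGroup.of b)
  rw [show (φmap Λ a false) (FreeGroup.of b) = raagOf _ ⟨(b : V), b.2.ne'⟩ from
    FreeGroup.lift_apply_of] at h1
  rw [show (φmap Λ a true) (FreeGroup.of b) = (1, FreeGroup.of b) from rfl] at h2
  rw [h1, h2]

open scoped Classical in
/-- `RAAG Λ →* GP`. -/
noncomputable def fromRaag : RAAG Λ →* GP Λ a :=
  raagLift (fun v =>
    if h : v = a then PushoutI.of (φ := φmap Λ a) true (Multiplicative.ofAdd 1, 1)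
    else PushoutI.of (φ := φmap Λ a) false (raagOf _ ⟨v, h⟩)) (by
    have key : ∀ v (hv : Λ.Adj a v),
        Commute (PushoutI.of (φ := φmap Λ a) true (Multiplicative.ofAdd 1, 1))
          (PushoutI.of (φ := φmap Λ a) false (raagOf _ ⟨v, hv.ne'⟩)) := by
      intro v hv
      rw [of_false_link Λ a ⟨v, hv⟩]
      refine Commute.map ?_ (PushoutI.of (φ := φmap Λ a) true)
      show ((Multiplicative.ofAdd 1 : Multiplicative ℤ) * 1, (1 : CC Λ a) * FreeGroup.of ⟨v, hv⟩) =
        (1 * Multiplicative.ofAdd 1, FreeGroup.of ⟨v, hv⟩ * 1)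
      rw [mul_one, one_mul, mul_one, one_mul]
    intro u v huv
    by_cases hu : u = a
    · subst hu
      rw [dif_pos rfl, dif_neg huv.ne']
      exact key v huv
    · by_cases hv : v = a
      · subst hv
        rw [dif_pos rfl, dif_neg hu]
        exact (key u huv.symm).symm
      · rw [dif_neg hu, dif_neg hv]
        refine Commute.map ?_ (PushoutI.of (φ := φmap Λ a) false)
        exact raag_commute (show Λ.Adj u v from huv))

theorem fromRaag_a : fromRaag Λ a (raagOf Λ a) =
    PushoutI.of (φ := φmap Λ a) true (Multiplicative.ofAdd 1, 1) := by
  simp only [fromRaag, raagLift_of]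
  exact dif_pos trivial

theorem fromRaag_ne (v : V) (h : v ≠ a) : fromRaag Λ a (raagOf Λ v) =
    PushoutI.of (φ := φmap Λ a) false (raagOf _ ⟨v, h⟩) := by
  simp only [fromRaag, raagLift_of]
  exact dif_neg h

theorem fromRaag_ψC (w : CC Λ a) :
    fromRaag Λ a (ψC Λ a w) = PushoutI.of (φ := φmap Λ a) true (1, w) := by
  have h : (fromRaag Λ a).comp (ψC Λ a) =
      (PushoutI.of (φ := φmap Λ a) true).comp (MonoidHom.inr _ _) := by
    apply FreeGroup.ext_hom
    intro b
    show fromRaag Λ a (ψC Λ a (FreeGroup.of b)) = PushoutI.of (φ := φmap Λ a) true (1, .of b)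
    rw [ψC, FreeGroup.lift_apply_of, fromRaag_ne Λ a _ b.2.ne']
    exact of_false_link Λ a b
  exact DFunLike.congr_fun h w

theorem zpow_aux (k : ℤ) :
    ((Multiplicative.ofAdd (1 : ℤ), (1 : CC Λ a)) : BB Λ a) ^ k =
      (Multiplicative.ofAdd k, 1) := by
  refine Prod.ext ?_ ?_
  · show (Multiplicative.ofAdd (1 : ℤ)) ^ k = Multiplicative.ofAdd k
    rw [← ofAdd_zsmul]
    norm_num
  · exact one_zpow k

theorem fromRaag_fB (p : BB Λ a) :
    fromRaag Λ a (fB Λ a p) = PushoutI.of (φ := φmap Λ a) true p := by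
  rcases p with ⟨m, w⟩
  rw [fB_apply, map_mul, map_zpow, fromRaag_a, fromRaag_ψC, ← map_zpow, zpow_aux, ← map_mul]
  congr 1
  refine Prod.ext ?_ ?_
  · show Multiplicative.ofAdd (Multiplicative.toAdd m) * 1 = m
    simp
  · show 1 * w = w
    simp

theorem toRaag_fromRaag (x : RAAG Λ) : toRaag Λ a (fromRaag Λ a x) = x := by
  have h : (toRaag Λ a).comp (fromRaag Λ a) = MonoidHom.id _ := by
    apply PresentedGroup.ext
    intro v
    show toRaag Λ a (fromRaag Λ a (raagOf Λ v)) = raagOf Λ v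
    by_cases hv : v = a
    · subst hv
      rw [fromRaag_a, toRaag_of_true, fB_apply]
      simp [ψC]
    · rw [fromRaag_ne Λ a v hv, toRaag_of_false, fA, raagLift_of]
  exact DFunLike.congr_fun h x

theorem fB_injective (htri : Λ.CliqueFree 3) : Function.Injective (fB Λ a) := by
  intro x y h
  have := congrArg (fromRaag Λ a) h
  rw [fromRaag_fB, fromRaag_fB] at this
  exact PushoutI.of_injective (φmap_injective Λ a htri) true this

theorem conj_cond : ∀ b : BB Λ a,
    b * (Multiplicative.ofAdd 1, (1 : CC Λ a)) * b⁻¹ ∉ (φmap Λ a true).range := by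
  rintro ⟨m, w⟩ ⟨u, hu⟩
  have h1 : ((φmap Λ a true) u).1 = 1 := rfl
  have h2 : ((m, w) * (Multiplicative.ofAdd 1, (1 : CC Λ a)) * (m, w)⁻¹).1 =
      Multiplicative.ofAdd 1 := by
    show m * Multiplicative.ofAdd 1 * m⁻¹ = Multiplicative.ofAdd 1
    rw [mul_comm m, mul_assoc, mul_inv_cancel, mul_one]
  rw [hu, h2] at h1
  have := congrArg Multiplicative.toAdd h1
  simpa using this

theorem centralizer_le_range (htri : Λ.CliqueFree 3) :
    Subgroup.centralizer {raagOf Λ a} ≤ (fB Λ a).range := by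
  intro g hg
  have hcomm : g * raagOf Λ a = raagOf Λ a * g :=
    Subgroup.mem_centralizer_singleton_iff.1 hg
  have hconj : (fromRaag Λ a g)⁻¹ *
      PushoutI.of (φ := φmap Λ a) true (Multiplicative.ofAdd 1, 1) * fromRaag Λ a g ∈
      (PushoutI.of (φ := φmap Λ a) true).range := by
    refine ⟨(Multiplicative.ofAdd 1, 1), ?_⟩
    rw [← fromRaag_a, ← map_inv, ← map_mul, ← map_mul]
    congr 1
    rw [mul_assoc, ← hcomm, ← mul_assoc, inv_mul_cancel, one_mul]
  have hmem := mem_range_of_conj (j := true) (φmap_injective Λ a htri)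
    (c := ((Multiplicative.ofAdd 1, 1) : BB Λ a)) (conj_cond Λ a) hconj
  rcases hmem with ⟨p, hp⟩
  refine ⟨p, ?_⟩
  have := congrArg (toRaag Λ a) hp
  rw [toRaag_of_true] at this
  rw [this, toRaag_fromRaag]

theorem ψC_mem_closure (w : CC Λ a) :
    ψC Λ a w ∈ Subgroup.closure (raagOf Λ '' insert a (Λ.neighborSet a)) := by
  induction w using FreeGroup.induction_on with
  | C1 => rw [map_one]; exact Subgroup.one_mem _
  | of b => exact Subgroup.subset_closure ⟨b, Set.mem_insert_of_mem _ b.2, (show (ψC Λ a) (FreeGroup.of b) = raagOf Λ (b : V) from FreeGroup.lift_apply_of).symm⟩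
  | inv_of b ih => simpa using ih
  | mul x y ihx ihy => rw [map_mul]; exact Subgroup.mul_mem _ ihx ihy

theorem range_fB_eq_closure :
    (fB Λ a).range = Subgroup.closure (raagOf Λ '' insert a (Λ.neighborSet a)) := by
  apply le_antisymm
  · rintro x ⟨⟨m, w⟩, rfl⟩
    rw [fB_apply]
    refine Subgroup.mul_mem _ (Subgroup.zpow_mem _ ?_ _) (ψC_mem_closure Λ a w)
    exact Subgroup.subset_closure ⟨a, Set.mem_insert _ _, rfl⟩
  · rw [Subgroup.closure_le]
    rintro x ⟨v, hv, rfl⟩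
    rcases Set.mem_insert_iff.1 hv with h | h
    · subst h
      exact ⟨(Multiplicative.ofAdd 1, 1), by rw [fB_apply]; simp [ψC]⟩
    · exact ⟨(1, FreeGroup.of ⟨v, h⟩), by rw [fB_apply]; simp [ψC]⟩

theorem closure_le_centralizer :
    Subgroup.closure (raagOf Λ '' insert a (Λ.neighborSet a)) ≤
      Subgroup.centralizer {raagOf Λ a} := by
  rw [Subgroup.closure_le]
  rintro x ⟨v, hv, rfl⟩
  rw [SetLike.mem_coe, Subgroup.mem_centralizer_singleton_iff]
  rcases Set.mem_insert_iff.1 hv with h | h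
  · subst h; rfl
  · exact (raag_commute h).eq.symm

theorem centralizer_eq_closure (htri : Λ.CliqueFree 3) :
    Subgroup.centralizer {raagOf Λ a} =
      Subgroup.closure (raagOf Λ '' insert a (Λ.neighborSet a)) :=
  le_antisymm (fun g hg => (range_fB_eq_closure Λ a) ▸ centralizer_le_range Λ a htri hg)
    (closure_le_centralizer Λ a)

end Star

end RaagAux

/-- If `Λ` is finite, connected, triangle-free and has at least two
vertices, then for every vertex `a` the centralizer `C(a)` in the RAAG `G_Λ` is the
subgroup generated by the star of `a`, and it splits as a direct product
`⟨a⟩ × F(Lk_Λ(a))` with `⟨a⟩ ≅ ℤ` and `F(Lk_Λ(a))` the free group on the link of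
`a`; moreover the subgroup generated by `Lk_Λ(a)` is free on those generators. -/
theorem raag_centralizer_splits {V : Type*} [Fintype V] (Λ : SimpleGraph V)
    (hconn : Λ.Connected) (htri : Λ.CliqueFree 3) (hcard : 1 < Fintype.card V)
    (a : V) :
    Subgroup.centralizer {raagOf Λ a} =
      Subgroup.closure (raagOf Λ '' insert a (Λ.neighborSet a)) ∧
    (∃ φ : Multiplicative ℤ × FreeGroup (Λ.neighborSet a) ≃*
        (Subgroup.centralizer {raagOf Λ a} : Subgroup (RAAG Λ)),
      ((φ (Multiplicative.ofAdd 1, 1) : Subgroup.centralizer {raagOf Λ a}) : RAAG Λ) =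
        raagOf Λ a ∧
      ∀ b : Λ.neighborSet a,
        ((φ (1, FreeGroup.of b) : Subgroup.centralizer {raagOf Λ a}) : RAAG Λ) =
          raagOf Λ (b : V)) ∧
    (∃ ψ : FreeGroup (Λ.neighborSet a) →* RAAG Λ,
      Function.Injective ψ ∧ ∀ b : Λ.neighborSet a, ψ (FreeGroup.of b) = raagOf Λ (b : V)) := by
  classical
  refine ⟨RaagAux.centralizer_eq_closure Λ a htri, ?_, RaagAux.freeGroupLink_injective htri a⟩
  have hinj := RaagAux.fB_injective Λ a htri
  have hEq : (RaagAux.fB Λ a).range = Subgroup.centralizer {raagOf Λ a} := by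
    rw [RaagAux.range_fB_eq_closure, RaagAux.centralizer_eq_closure Λ a htri]
  refine ⟨(MonoidHom.ofInjective hinj).trans (MulEquiv.subgroupCongr hEq), ?_, ?_⟩
  · show ((MulEquiv.subgroupCongr hEq)
      ((MonoidHom.ofInjective hinj) (Multiplicative.ofAdd 1, 1)) : RAAG Λ) = raagOf Λ a
    rw [MulEquiv.subgroupCongr_apply, MonoidHom.ofInjective_apply, RaagAux.fB_apply]
    simp [RaagAux.ψC]
  · intro b
    show ((MulEquiv.subgroupCongr hEq)
      ((MonoidHom.ofInjective hinj) (1, FreeGroup.of b)) : RAAG Λ) = raagOf Λ (b : V)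
    rw [MulEquiv.subgroupCongr_apply, MonoidHom.ofInjective_apply, RaagAux.fB_apply]
    simp [RaagAux.ψC]
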